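/- If p is a prime with p ≡ 3 (mod 4), then the number of a ∈ Z_p such that a, a+1, a+2 are all nonzero, with a and a+2 quadratic residues and a+1 a quadratic nonresidue modulo p, is exactly ⌈(p-3)/8⌉. -/

import Mathlib

open Finset

private lemma qc_shift_sum (p : ℕ) [Fact p.Prime] (hp2 : p ≠ 2) (b : ZMod p) (hb : b ≠ 0) :
    ∑ a : ZMod p, quadraticChar (ZMod p) a * quadraticChar (ZMod p) (a + b) = -1 := by
  set χ := quadraticChar (ZMod p) with hχ
  have hchar : ringChar (ZMod p) ≠ 2 := by rw [ZMod.ringChar_zmod_n]; exact hp2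
  have h1 : ∑ a : ZMod p, χ a * χ (a + b)
      = ∑ a ∈ univ.erase (0 : ZMod p), χ a * χ (a + b) := by
    rw [Finset.sum_erase_eq_sub (mem_univ _)]
    simp [hχ]
  have h2 : ∑ a ∈ univ.erase (0 : ZMod p), χ a * χ (a + b)
      = ∑ a ∈ univ.erase (0 : ZMod p), χ (1 + b * a⁻¹) := by
    apply Finset.sum_congr rfl
    intro a ha
    have ha0 : a ≠ 0 := Finset.ne_of_mem_erase ha
    have : a + b = a * (1 + b * a⁻¹) := by field_simp
    rw [this, map_mul, ← mul_assoc, ← pow_two, quadraticChar_sq_one ha0, one_mul]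
  have h3 : ∑ a ∈ univ.erase (0 : ZMod p), χ (1 + b * a⁻¹)
      = ∑ t ∈ univ.erase (1 : ZMod p), χ t := by
    apply Finset.sum_nbij' (fun a => 1 + b * a⁻¹) (fun t => b * (t - 1)⁻¹)
    · intro a ha
      have ha0 : a ≠ 0 := Finset.ne_of_mem_erase ha
      simp only [mem_erase, mem_univ, and_true]
      intro h
      have : b * a⁻¹ = 0 := by linear_combination h
      rcases mul_eq_zero.mp this with h' | h'
      · exact hb h'
      · exact ha0 (inv_eq_zero.mp h')
    · intro t ht
      have ht1 : t ≠ 1 := Finset.ne_of_mem_erase ht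
      simp only [mem_erase, mem_univ, and_true]
      intro h
      rcases mul_eq_zero.mp h with h' | h'
      · exact hb h'
      · exact ht1 (by have := inv_eq_zero.mp h'; linear_combination this)
    · intro a ha
      have ha0 : a ≠ 0 := Finset.ne_of_mem_erase ha
      field_simp
      simp [hb]
    · intro t ht
      have ht1 : t - 1 ≠ 0 := sub_ne_zero.mpr (Finset.ne_of_mem_erase ht)
      field_simp
      ring
    · intro a _; rfl
  have h4 : ∑ t ∈ univ.erase (1 : ZMod p), χ t = -1 := by
    rw [Finset.sum_erase_eq_sub (mem_univ _), quadraticChar_sum_zero hchar, map_one]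
    ring
  rw [h1, h2, h3, h4]

theorem pattern_rnr_count (p : ℕ) [Fact p.Prime] (hp : p % 4 = 3) :
    (Finset.univ.filter (fun a : ZMod p =>
      a ≠ 0 ∧ a + 1 ≠ 0 ∧ a + 2 ≠ 0 ∧
      IsSquare a ∧ ¬ IsSquare (a + 1) ∧ IsSquare (a + 2))).card = (p + 4) / 8 := by
  have hple : 3 ≤ p := by
    rcases Nat.lt_or_ge p 3 with h | h
    · interval_cases p <;> omega
    · exact h
  have hp2 : p ≠ 2 := by omega
  have hchar : ringChar (ZMod p) ≠ 2 := by rw [ZMod.ringChar_zmod_n]; exact hp2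
  set χ := quadraticChar (ZMod p) with hχ
  have hcard : Fintype.card (ZMod p) = p := ZMod.card p
  -- basic nonzero facts
  have h2ne : (2 : ZMod p) ≠ 0 := by
    intro h
    have : ((2 : ℕ) : ZMod p) = 0 := by push_cast; exact h
    have hd : p ∣ 2 := (ZMod.natCast_eq_zero_iff 2 p).mp this
    have := Nat.le_of_dvd (by norm_num) hd
    omega
  have h1ne : (1 : ZMod p) ≠ 0 := one_ne_zero
  -- χ(-1) = -1
  have hneg1 : χ (-1) = -1 := by
    rw [hχ, quadraticChar_neg_one_iff_not_isSquare, FiniteField.isSquare_neg_one_iff, hcard]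
    simp [hp]
  have hnegx : ∀ x : ZMod p, χ (-x) = - χ x := by
    intro x
    rw [show -x = -1 * x by ring, map_mul, hneg1]; ring
  -- set rewriting: the filter equals a χ-condition filter
  set T := univ.filter (fun a : ZMod p => χ a = 1 ∧ χ (a + 1) = -1 ∧ χ (a + 2) = 1) with hT
  have hset : (Finset.univ.filter (fun a : ZMod p =>
      a ≠ 0 ∧ a + 1 ≠ 0 ∧ a + 2 ≠ 0 ∧
      IsSquare a ∧ ¬ IsSquare (a + 1) ∧ IsSquare (a + 2))) = T := by
    ext a
    simp only [hT, mem_filter, mem_univ, true_and]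
    constructor
    · rintro ⟨h0, _, h02, hs, hns, hs2⟩
      exact ⟨(quadraticChar_one_iff_isSquare h0).mpr hs,
        quadraticChar_neg_one_iff_not_isSquare.mpr hns,
        (quadraticChar_one_iff_isSquare h02).mpr hs2⟩
    · rintro ⟨c0, c1, c2⟩
      have h0 : a ≠ 0 := by intro h; rw [h] at c0; simp [hχ] at c0
      have h01 : a + 1 ≠ 0 := by intro h; rw [h] at c1; simp [hχ] at c1
      have h02 : a + 2 ≠ 0 := by intro h; rw [h] at c2; simp [hχ] at c2
      exact ⟨h0, h01, h02, (quadraticChar_one_iff_isSquare h0).mp c0,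
        quadraticChar_neg_one_iff_not_isSquare.mp c1,
        (quadraticChar_one_iff_isSquare h02).mp c2⟩
  rw [hset]
  -- the indicator function
  set f : ZMod p → ℤ := fun a => (1 + χ a) * (1 - χ (a + 1)) * (1 + χ (a + 2)) with hf
  -- S : the set with a, a+1, a+2 all nonzero
  set S : Finset (ZMod p) := ((univ.erase 0).erase (-1)).erase (-2) with hS
  have hmemS : ∀ a : ZMod p, a ∈ S ↔ a ≠ 0 ∧ a + 1 ≠ 0 ∧ a + 2 ≠ 0 := by
    intro a
    simp only [hS, mem_erase, mem_univ, and_true]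
    constructor
    · rintro ⟨h2, h1, h0⟩
      refine ⟨h0, ?_, ?_⟩
      · intro h; apply h1; linear_combination h
      · intro h; apply h2; linear_combination h
    · rintro ⟨h0, h1, h2⟩
      refine ⟨?_, ?_, h0⟩
      · intro h; apply h2; linear_combination h
      · intro h; apply h1; linear_combination h
  -- sum over S equals 8 * card T
  have hsum : ∑ a ∈ S, f a = 8 * T.card := by
    rw [← Finset.sum_filter_add_sum_filter_not S
      (fun a => χ a = 1 ∧ χ (a + 1) = -1 ∧ χ (a + 2) = 1) f]
    have e1 : S.filter (fun a => χ a = 1 ∧ χ (a + 1) = -1 ∧ χ (a + 2) = 1) = T := by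
      ext a
      simp only [hT, mem_filter, mem_univ, true_and, hmemS, and_iff_right_iff_imp]
      rintro ⟨c0, c1, c2⟩
      refine ⟨?_, ?_, ?_⟩
      · intro h; rw [h] at c0; simp [hχ] at c0
      · intro h; rw [h] at c1; simp [hχ] at c1
      · intro h; rw [h] at c2; simp [hχ] at c2
    have e2 : ∑ a ∈ S.filter (fun a => χ a = 1 ∧ χ (a + 1) = -1 ∧ χ (a + 2) = 1), f a
        = 8 * T.card := by
      rw [e1]
      have hval : ∀ a ∈ T, f a = 8 := by
        intro a ha
        obtain ⟨c0, c1, c2⟩ := (Finset.mem_filter.mp ha).2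
        simp only [hf, c0, c1, c2]; norm_num
      rw [Finset.sum_congr rfl hval, Finset.sum_const, nsmul_eq_mul, mul_comm]
    have e3 : ∑ a ∈ S.filter (fun a => ¬(χ a = 1 ∧ χ (a + 1) = -1 ∧ χ (a + 2) = 1)), f a
        = 0 := by
      apply Finset.sum_eq_zero
      intro a ha
      obtain ⟨haS, hnc⟩ := Finset.mem_filter.mp ha
      obtain ⟨h0, h1, h2⟩ := (hmemS a).mp haS
      rw [hf]
      rcases quadraticChar_dichotomy h0 with c0 | c0
      · rcases quadraticChar_dichotomy h1 with c1 | c1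
        · simp only [hχ, c1]; ring
        · rcases quadraticChar_dichotomy h2 with c2 | c2
          · exact absurd ⟨c0, c1, c2⟩ hnc
          · simp only [hχ, c2]; ring
      · simp only [hχ, c0]; ring
    rw [e2, e3, add_zero]
  -- boundary removal
  have hbd : ∑ a ∈ S, f a = (∑ a : ZMod p, f a) - f 0 - f (-1) - f (-2) := by
    have hm2 : (-2 : ZMod p) ∈ univ.erase (0 : ZMod p) := by
      simp only [mem_erase, mem_univ, and_true]
      intro h; exact h2ne (by linear_combination -h)
    have hm2' : (-2 : ZMod p) ∈ (univ.erase (0 : ZMod p)).erase (-1) :=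
      Finset.mem_erase.mpr ⟨fun h => h1ne (by linear_combination -h), hm2⟩
    have hm1 : (-1 : ZMod p) ∈ univ.erase (0 : ZMod p) := by
      simp only [mem_erase, mem_univ, and_true]
      intro h; exact h1ne (by linear_combination -h)
    rw [hS, Finset.sum_erase_eq_sub hm2', Finset.sum_erase_eq_sub hm1,
      Finset.sum_erase_eq_sub (mem_univ _)]
  -- boundary values
  have hχ1 : χ 1 = 1 := map_one χ
  have hχ2 : χ (-2 : ZMod p) = - χ 2 := hnegx 2
  have hf0 : f 0 = 0 := by rw [hf]; simp [hχ1]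
  have hfm1 : f (-1) = 0 := by
    rw [hf]; simp only [hneg1]
    norm_num
  have hfm2 : f (-2) = 2 * (1 - χ 2) := by
    simp only [hf, show (-2 : ZMod p) + 1 = -1 from by ring,
      show (-2 : ZMod p) + 2 = 0 from by ring, hneg1, hχ2]
    simp [hχ]
    ring
  -- univ sum of f
  have huniv : ∑ a : ZMod p, f a = p + 1 := by
    have hexp : ∀ a : ZMod p, f a =
        1 + χ a - χ (a + 1) + χ (a + 2) - χ a * χ (a + 1) + χ a * χ (a + 2)
          - χ (a + 1) * χ (a + 2) - χ a * (χ (a + 1) * χ (a + 2)) := by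
      intro a; rw [hf]; ring
    rw [Finset.sum_congr rfl (fun a _ => hexp a)]
    simp only [Finset.sum_add_distrib, Finset.sum_sub_distrib]
    have s0 : ∑ _a : ZMod p, (1 : ℤ) = p := by
      rw [Finset.sum_const, card_univ, hcard]; simp
    have s1 : ∑ a : ZMod p, χ a = 0 := quadraticChar_sum_zero hchar
    have s1' : ∑ a : ZMod p, χ (a + 1) = 0 :=
      (Fintype.sum_equiv (Equiv.addRight (1 : ZMod p)) (fun a => (χ (a + 1) : ℤ))
        (fun a => (χ a : ℤ)) (fun a => rfl)).trans s1
    have s1'' : ∑ a : ZMod p, χ (a + 2) = 0 :=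
      (Fintype.sum_equiv (Equiv.addRight (2 : ZMod p)) (fun a => (χ (a + 2) : ℤ))
        (fun a => (χ a : ℤ)) (fun a => rfl)).trans s1
    have s2 : ∑ a : ZMod p, χ a * χ (a + 1) = -1 := qc_shift_sum p hp2 1 h1ne
    have s2' : ∑ a : ZMod p, χ a * χ (a + 2) = -1 := qc_shift_sum p hp2 2 h2ne
    have s2'' : ∑ a : ZMod p, χ (a + 1) * χ (a + 2) = -1 :=
      (Fintype.sum_equiv (Equiv.addRight (1 : ZMod p)) (fun a => (χ (a + 1) * χ (a + 2) : ℤ))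
        (fun a => (χ a * χ (a + 1) : ℤ)) (fun a => by
          simp only [Equiv.coe_addRight]
          rw [show ∀ a : ZMod p, a + 1 + 1 = a + 2 from fun a => by ring])).trans s2
    have s3 : ∑ a : ZMod p, χ a * (χ (a + 1) * χ (a + 2)) = 0 := by
      have key : ∑ a : ZMod p, χ a * (χ (a + 1) * χ (a + 2))
          = - ∑ a : ZMod p, χ a * (χ (a + 1) * χ (a + 2)) := by
        have h := Fintype.sum_equiv (Equiv.subLeft (-2 : ZMod p))
          (fun a : ZMod p => (χ a * (χ (a + 1) * χ (a + 2)) : ℤ))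
          (fun a : ZMod p => (-(χ a * (χ (a + 1) * χ (a + 2))) : ℤ)) (fun a => by
            simp only [Equiv.subLeft_apply]
            rw [show (-2 : ZMod p) - a = -(a + 2) from by ring,
              show -(a + 2) + 1 = -(a + 1) from by ring,
              show -(a + 2) + 2 = -a from by ring, hnegx, hnegx, hnegx]
            ring)
        conv_lhs => rw [h]
        exact Finset.sum_neg_distrib _
      linarith
    rw [s0, s1, s1', s1'', s2, s2', s2'', s3]
    ring
  -- 8 * card T = p - 1 + 2 * χ 2
  have hkey : (8 : ℤ) * T.card = p - 1 + 2 * χ 2 := by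
    rw [← hsum, hbd, huniv, hf0, hfm1, hfm2]; ring
  -- finish by cases on p % 8
  have h8 : p % 8 = 3 ∨ p % 8 = 7 := by omega
  rcases h8 with h8 | h8
  · have hn2 : χ 2 = -1 := by
      rw [hχ, quadraticChar_neg_one_iff_not_isSquare, FiniteField.isSquare_two_iff, hcard]
      simp [h8]
    rw [hn2] at hkey
    have : (8 : ℤ) * T.card = p - 3 := by linarith
    have hnat : 8 * T.card = p - 3 := by
      have hp3 : (3 : ℤ) ≤ p := by exact_mod_cast hple
      omega
    omega
  · have hn2 : χ 2 = 1 := by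
      rw [hχ, quadraticChar_one_iff_isSquare h2ne, FiniteField.isSquare_two_iff, hcard]
      constructor <;> omega
    rw [hn2] at hkey
    have : (8 : ℤ) * T.card = p + 1 := by linarith
    have hnat : 8 * T.card = p + 1 := by omega
    omega
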